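/- Let a, b, c be integers with a ≠ 0, set D := b² − 4ac, and assume D > 0 and D is not a perfect square. Let d₁, d₂ be positive coprime integers. Working with 2×2 real matrices, set λ = (−b + √D)/(2a), λ' = (−b − √D)/(2a), B = [[1, 1], [λ, λ']], P = [[d₁, 0], [0, d₂]], and Γ = [[(D + √D)/2, 0], [0, (D − √D)/2]]. Then there exists a 2×2 integer matrix R such that Γ·(B⁻¹·P) = (B⁻¹·P)·R (with R viewed as a real matrix) if and only if d₁ divides a and d₂ divides c. -/

import Mathlib

open Matrix

set_option maxHeartbeats 1000000 in
/-- Lemma 4.4 (symplectically adapted bases): with `D = b² − 4ac > 0` not a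
square, `λ = (−b+√D)/(2a)`, `λ' = (−b−√D)/(2a)`, `B = [[1,1],[λ,λ']]`,
`P = diag(d₁,d₂)` and `Γ = diag((D+√D)/2, (D−√D)/2)`, there is an integer
matrix `R` with `Γ·(B⁻¹P) = (B⁻¹P)·R` if and only if `d₁ ∣ a` and `d₂ ∣ c`. -/
theorem statement12 (a b c : ℤ) (ha : a ≠ 0) (D : ℤ) (hD : D = b ^ 2 - 4 * a * c)
    (hDpos : 0 < D) (hns : ¬ IsSquare D) (d₁ d₂ : ℤ) (hd₁ : 0 < d₁) (hd₂ : 0 < d₂)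
    (hco : IsCoprime d₁ d₂) :
    (∃ R : Matrix (Fin 2) (Fin 2) ℤ,
        (!![((D : ℝ) + Real.sqrt (D : ℝ)) / 2, 0; 0, ((D : ℝ) - Real.sqrt (D : ℝ)) / 2]) *
          ((!![(1 : ℝ), 1;
              (-(b : ℝ) + Real.sqrt (D : ℝ)) / (2 * (a : ℝ)),
              (-(b : ℝ) - Real.sqrt (D : ℝ)) / (2 * (a : ℝ))])⁻¹ *
            !![(d₁ : ℝ), 0; 0, (d₂ : ℝ)])
        = ((!![(1 : ℝ), 1;
              (-(b : ℝ) + Real.sqrt (D : ℝ)) / (2 * (a : ℝ)),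
              (-(b : ℝ) - Real.sqrt (D : ℝ)) / (2 * (a : ℝ))])⁻¹ *
            !![(d₁ : ℝ), 0; 0, (d₂ : ℝ)]) *
          (R.map (fun n : ℤ => (n : ℝ))))
      ↔ (d₁ ∣ a ∧ d₂ ∣ c) := by
  have hD0 : (0:ℝ) < (D:ℝ) := by exact_mod_cast hDpos
  set s : ℝ := Real.sqrt (D:ℝ) with hs
  have hs2 : s ^ 2 = (D:ℝ) := Real.sq_sqrt hD0.le
  have hspos : 0 < s := Real.sqrt_pos.2 hD0
  have hs0 : s ≠ 0 := hspos.ne'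
  have ha' : (a:ℝ) ≠ 0 := Int.cast_ne_zero.2 ha
  clear_value s
  have hDr : (D:ℝ) = (b:ℝ)^2 - 4*a*c := by exact_mod_cast congrArg (Int.cast : ℤ → ℝ) hD
  set B : Matrix (Fin 2) (Fin 2) ℝ :=
    !![(1 : ℝ), 1; (-(b : ℝ) + s) / (2 * (a : ℝ)), (-(b : ℝ) - s) / (2 * (a : ℝ))] with hB
  set C : Matrix (Fin 2) (Fin 2) ℝ :=
    !![((b:ℝ)+s)/(2*s), (a:ℝ)/s; (s-(b:ℝ))/(2*s), -((a:ℝ)/s)] with hC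
  have hBC : B * C = 1 := by
    rw [hB, hC, Matrix.mul_fin_two]
    have h1 : (1 : Matrix (Fin 2) (Fin 2) ℝ) = !![1,0;0,1] := by
      ext i j; fin_cases i <;> fin_cases j <;> simp [Matrix.one_apply]
    rw [h1]
    ext i j
    fin_cases i <;> fin_cases j <;>
      simp only [Fin.zero_eta, Fin.mk_one, Fin.isValue, Matrix.of_apply, Matrix.cons_val', Matrix.cons_val_zero, Matrix.cons_val_one,
        Matrix.head_cons, Matrix.empty_val', Matrix.cons_val_fin_one, Matrix.head_fin_const] <;>
      field_simp <;> ring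
  have hBinv : B⁻¹ = C := Matrix.inv_eq_right_inv hBC
  have hCB : C * B = 1 := mul_eq_one_comm.1 hBC
  set P : Matrix (Fin 2) (Fin 2) ℝ := !![(d₁ : ℝ), 0; 0, (d₂ : ℝ)] with hP
  set G : Matrix (Fin 2) (Fin 2) ℝ :=
    !![((D : ℝ) + s) / 2, 0; 0, ((D : ℝ) - s) / 2] with hG
  set N : Matrix (Fin 2) (Fin 2) ℝ :=
    !![((D:ℝ)+(b:ℝ))/2, (a:ℝ); -(c:ℝ), ((D:ℝ)-(b:ℝ))/2] with hN
  have hBGC : B * (G * C) = N := by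
    rw [hB, hG, hC, hN, Matrix.mul_fin_two, Matrix.mul_fin_two]
    ext i j
    fin_cases i <;> fin_cases j <;>
      simp only [Fin.zero_eta, Fin.mk_one, Fin.isValue, Matrix.of_apply, Matrix.cons_val', Matrix.cons_val_zero, Matrix.cons_val_one,
        Matrix.head_cons, Matrix.empty_val', Matrix.cons_val_fin_one, Matrix.head_fin_const] <;>
      field_simp
    · ring
    · ring
    · linear_combination (2 * s) * hs2 + (2 * s) * hDr
    · ring
  rw [hBinv]
  have key : ∀ M : Matrix (Fin 2) (Fin 2) ℝ,
      (G * (C * P) = C * P * M) ↔ (N * P = P * M) := by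
    intro M
    constructor
    · intro h
      have := congrArg (fun X => B * X) h
      simpa [← Matrix.mul_assoc, hBC, hBGC] using this
    · intro h
      have := congrArg (fun X => C * X) h
      calc G * (C * P) = (C * B) * (G * (C * P)) := by rw [hCB, Matrix.one_mul]
        _ = C * (B * (G * C)) * P := by simp [Matrix.mul_assoc]
        _ = C * (P * M) := by rw [hBGC, Matrix.mul_assoc, h]
        _ = C * P * M := by rw [Matrix.mul_assoc]
  rw [show (G * (C * P) : Matrix (Fin 2) (Fin 2) ℝ) = G * (C * P) from rfl]
  constructor
  · rintro ⟨R, hR⟩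
    have h2 := (key _).1 hR
    rw [hN, hP, Matrix.mul_fin_two] at h2
    have e01 : (a:ℝ) * d₂ = (d₁:ℝ) * (R 0 1 : ℤ) := by
      have := congrFun (congrFun h2 0) 1
      simpa [Matrix.mul_apply, Fin.sum_univ_two, Matrix.map_apply] using this
    have e10 : -(c:ℝ) * d₁ = (d₂:ℝ) * (R 1 0 : ℤ) := by
      have := congrFun (congrFun h2 1) 0
      simpa [Matrix.mul_apply, Fin.sum_univ_two, Matrix.map_apply] using this
    have i01 : a * d₂ = d₁ * R 0 1 := by exact_mod_cast e01
    have i10 : -c * d₁ = d₂ * R 1 0 := by exact_mod_cast e10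
    constructor
    · exact hco.dvd_of_dvd_mul_right ⟨R 0 1, by linarith [i01]⟩
    · have : d₂ ∣ c * d₁ := ⟨-(R 1 0), by linarith [i10]⟩
      exact hco.symm.dvd_of_dvd_mul_right this
  · rintro ⟨⟨a', ha2⟩, ⟨c', hc2⟩⟩
    have heb : Even (D + b) := by
      have : D + b = b * (b + 1) - 4 * (a * c) := by rw [hD]; ring
      rw [this]
      exact (Int.even_mul_succ_self b).sub (by exact ⟨2 * (a*c), by ring⟩)
    obtain ⟨e, he⟩ := heb
    have hf : D - b = 2 * (e - b) := by omega
    refine ⟨!![e, a' * d₂; -(c' * d₁), e - b], (key _).2 ?_⟩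
    rw [hN, hP, Matrix.mul_fin_two]
    have h1 : (!![e, a' * d₂; -(c' * d₁), e - b] : Matrix (Fin 2) (Fin 2) ℤ).map
        (fun n : ℤ => (n : ℝ)) =
        !![(e:ℝ), (a':ℝ) * d₂; -((c':ℝ) * d₁), (e:ℝ) - b] := by
      ext i j; fin_cases i <;> fin_cases j <;> simp [Matrix.map_apply] <;> push_cast <;> ring
    rw [h1, Matrix.mul_fin_two]
    have hde : (D:ℝ) + b = 2 * e := by exact_mod_cast congrArg (Int.cast : ℤ → ℝ) (by omega : D + b = 2 * e)
    have har : (a:ℝ) = d₁ * a' := by exact_mod_cast congrArg (Int.cast : ℤ → ℝ) ha2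
    have hcr : (c:ℝ) = d₂ * c' := by exact_mod_cast congrArg (Int.cast : ℤ → ℝ) hc2
    ext i j
    fin_cases i <;> fin_cases j <;>
      simp only [Fin.zero_eta, Fin.mk_one, Fin.isValue, Matrix.of_apply, Matrix.cons_val',
        Matrix.cons_val_zero, Matrix.cons_val_one, Matrix.head_cons, Matrix.empty_val',
        Matrix.cons_val_fin_one, Matrix.head_fin_const, har, hcr]
    · linear_combination ((d₁ : ℝ)) / 2 * hde
    · ring
    · ring
    · linear_combination ((d₂ : ℝ)) / 2 * hde
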